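/- For α ∈ (0,1) and s ∈ (−α, α−1) (nonempty only when this interval is nonempty, i.e., it must be interpreted for α ∈ (1/2,1)), the Mellin transform M_α(s) = ∫_0^∞ t^s · sin(πα) t^{α−1}(1+t)/(π(t^{2α} − 2cos(πα)t^α + 1)) dt equals − sin(π/α) sin(πs) / (α sin(πs/α) sin(π(s+1)/α)). -/

import Mathlib

open Real MeasureTheory Set

lemma integrableOn_of_rpow_bounds {E : Type*} [NormedAddCommGroup E] {f : ℝ → E} {p q C : ℝ}
    (hp : -1 < p) (hq : q < -1)
    (hcont : ContinuousOn f (Ioi 0))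
    (h1 : ∀ x ∈ Ioc (0:ℝ) 1, ‖f x‖ ≤ C * x ^ p)
    (h2 : ∀ x ∈ Ioi (1:ℝ), ‖f x‖ ≤ C * x ^ q) :
    IntegrableOn f (Ioi 0) := by
  have hmeas : ∀ s : Set ℝ, s ⊆ Ioi 0 → MeasurableSet s → AEStronglyMeasurable f (volume.restrict s) :=
    fun s hs hms => (hcont.mono hs).aestronglyMeasurable hms
  have hIoc : IntegrableOn f (Ioc 0 1) := by
    have hint : IntegrableOn (fun x : ℝ => C * x ^ p) (Ioc 0 1) :=
      ((intervalIntegrable_iff_integrableOn_Ioc_of_le (by norm_num)).mp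
        (intervalIntegral.intervalIntegrable_rpow' hp)).const_mul C
    refine Integrable.mono hint (hmeas _ (fun x hx => hx.1) measurableSet_Ioc) ?_
    filter_upwards [ae_restrict_mem measurableSet_Ioc] with x hx
    calc ‖f x‖ ≤ C * x ^ p := h1 x hx
    _ ≤ ‖C * x ^ p‖ := le_abs_self _
  have hIoi : IntegrableOn f (Ioi 1) := by
    have hint : IntegrableOn (fun x : ℝ => C * x ^ q) (Ioi 1) :=
      (integrableOn_Ioi_rpow_of_lt hq one_pos).const_mul C
    refine Integrable.mono hint (hmeas _ (fun x hx => mem_Ioi.mpr (lt_trans one_pos (mem_Ioi.mp hx))) measurableSet_Ioi) ?_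
    filter_upwards [ae_restrict_mem measurableSet_Ioi] with x hx
    calc ‖f x‖ ≤ C * x ^ q := h2 x hx
    _ ≤ ‖C * x ^ q‖ := le_abs_self _
  have := hIoc.union hIoi
  rwa [Ioc_union_Ioi_eq_Ioi (by norm_num : (0:ℝ) ≤ 1)] at this

lemma contOn_cpow (c : ℂ) : ContinuousOn (fun x : ℝ => (x:ℂ) ^ c) (Ioi 0) := by
  intro x hx
  exact (Complex.continuousAt_ofReal_cpow_const x c (Or.inr (ne_of_gt hx))).continuousWithinAt

lemma norm_cpow_real {x : ℝ} (hx : 0 < x) (p : ℝ) : ‖(x:ℂ) ^ ((p:ℂ)-1)‖ = x ^ (p-1) := by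
  rw [Complex.norm_cpow_eq_rpow_re_of_pos hx]
  norm_num

lemma denom_ne {x : ℝ} (hx : 0 < x) {a : ℂ} (ha : 0 < a.re) : (x:ℂ) + a ≠ 0 := by
  intro h
  have : ((x:ℂ) + a).re = 0 := by rw [h]; simp
  simp only [Complex.add_re, Complex.ofReal_re] at this
  linarith

lemma norm_denom_ge {x : ℝ} (hx : 0 ≤ x) {a : ℂ} (ha : 0 < a.re) (δ : ℝ) (hδ : δ ≤ a.re) :
    x + δ ≤ ‖(x:ℂ) + a‖ := by
  calc x + δ ≤ ((x:ℂ) + a).re := by simp only [Complex.add_re, Complex.ofReal_re]; linarith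
  _ ≤ ‖(x:ℂ) + a‖ := Complex.re_le_norm _

lemma int_cplx_one (p : ℝ) (hp0 : 0 < p) (hp1 : p < 1) {a : ℂ} (ha : 0 < a.re) :
    IntegrableOn (fun x : ℝ => (x:ℂ) ^ ((p:ℂ)-1) / ((x:ℂ) + a)) (Ioi 0) := by
  have key : ∀ x : ℝ, 0 < x → ‖(x:ℂ) ^ ((p:ℂ)-1) / ((x:ℂ) + a)‖ ≤ x ^ (p-1) / (x + a.re) := by
    intro x hx
    rw [norm_div, norm_cpow_real hx]
    apply div_le_div_of_nonneg_left (by positivity) (by linarith)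
    exact norm_denom_ge hx.le ha a.re le_rfl
  refine integrableOn_of_rpow_bounds (p := p - 1) (q := p - 2) (C := a.re⁻¹ + 1)
    (by linarith) (by linarith) ?_ ?_ ?_
  · exact ((contOn_cpow _).div ((Complex.continuous_ofReal.continuousOn).add continuousOn_const)
      (fun x hx => denom_ne hx ha))
  · intro x hx
    have hx0 : (0:ℝ) < x := hx.1
    calc ‖(x:ℂ) ^ ((p:ℂ)-1) / ((x:ℂ) + a)‖ ≤ x ^ (p-1) / (x + a.re) := key x hx0
    _ ≤ x ^ (p-1) / a.re := by
        apply div_le_div_of_nonneg_left (by positivity) ha; linarith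
    _ = a.re⁻¹ * x ^ (p-1) := by rw [div_eq_inv_mul]
    _ ≤ (a.re⁻¹ + 1) * x ^ (p-1) := by
        apply mul_le_mul_of_nonneg_right (by linarith) (by positivity)
  · intro x hx
    have hx0 : (0:ℝ) < x := lt_trans one_pos hx
    calc ‖(x:ℂ) ^ ((p:ℂ)-1) / ((x:ℂ) + a)‖ ≤ x ^ (p-1) / (x + a.re) := key x hx0
    _ ≤ x ^ (p-1) / x := by
        apply div_le_div_of_nonneg_left (by positivity) hx0; linarith
    _ = x ^ (p-2) := by
        have h1 : x ^ (p-2) = x ^ (p-1) / x ^ (1:ℝ) := by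
          rw [← Real.rpow_sub hx0]; congr 1; push_cast; ring
        rw [h1, Real.rpow_one]
    _ ≤ (a.re⁻¹ + 1) * x ^ (p-2) := by
        nth_rewrite 1 [← one_mul (x ^ (p-2))]
        apply mul_le_mul_of_nonneg_right ?_ (by positivity)
        have : 0 < a.re⁻¹ := by positivity
        linarith

lemma int_cplx_two (p : ℝ) (hp0 : 0 < p) (hp1 : p < 1) {δ : ℝ} (hδ : 0 < δ) :
    IntegrableOn (fun x : ℝ => x ^ (p-1) / (x + δ)^2) (Ioi 0) := by
  refine integrableOn_of_rpow_bounds (p := p - 1) (q := p - 3) (C := (δ^2)⁻¹ + 1)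
    (by linarith) (by linarith) ?_ ?_ ?_
  · apply ContinuousOn.div
    · exact fun x hx => (Real.continuousAt_rpow_const x _ (Or.inl (ne_of_gt hx))).continuousWithinAt
    · fun_prop
    · intro x hx; have hx' : (0:ℝ) < x := hx; positivity
  · intro x hx
    have hx0 : (0:ℝ) < x := hx.1
    rw [Real.norm_eq_abs, abs_of_nonneg (by positivity)]
    calc x ^ (p-1) / (x + δ)^2 ≤ x ^ (p-1) / δ^2 := by
          apply div_le_div_of_nonneg_left (by positivity) (by positivity)
          nlinarith
    _ = (δ^2)⁻¹ * x ^ (p-1) := by rw [div_eq_inv_mul]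
    _ ≤ ((δ^2)⁻¹ + 1) * x ^ (p-1) := by
        apply mul_le_mul_of_nonneg_right (by linarith) (by positivity)
  · intro x hx
    have hx0 : (0:ℝ) < x := lt_trans one_pos hx
    rw [Real.norm_eq_abs, abs_of_nonneg (by positivity)]
    calc x ^ (p-1) / (x + δ)^2 ≤ x ^ (p-1) / x^2 := by
          apply div_le_div_of_nonneg_left (by positivity) (by positivity)
          nlinarith
    _ = x ^ (p-3) := by
        have h1 : x ^ (p-3) = x ^ (p-1) / x ^ ((2:ℕ):ℝ) := by
          rw [← Real.rpow_sub hx0]; congr 1; push_cast; ring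
        rw [h1, Real.rpow_natCast]
    _ ≤ ((δ^2)⁻¹ + 1) * x ^ (p-3) := by
        nth_rewrite 1 [← one_mul (x ^ (p-3))]
        apply mul_le_mul_of_nonneg_right ?_ (by positivity)
        have : 0 < (δ^2)⁻¹ := by positivity
        linarith

lemma base_case (p : ℝ) (hp0 : 0 < p) (hp1 : p < 1) :
    ∫ x in Ioi (0:ℝ), x ^ (p-1) / (1+x) = π / Real.sin (π * p) := by
  -- substitution x = u/(1-u)
  have himg : (fun u : ℝ => u / (1-u)) '' Ioo 0 1 = Ioi 0 := by
    ext x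
    constructor
    · rintro ⟨u, ⟨hu0, hu1⟩, rfl⟩
      exact div_pos hu0 (by linarith)
    · intro hx
      refine ⟨x / (1+x), ⟨div_pos hx (by linarith [mem_Ioi.mp hx]), ?_⟩, ?_⟩
      · rw [div_lt_one (by linarith [mem_Ioi.mp hx])]; linarith [mem_Ioi.mp hx]
      · have hx0 : (0:ℝ) < x := hx
        field_simp
        ring
  have hderiv : ∀ u ∈ Ioo (0:ℝ) 1, HasDerivWithinAt (fun u : ℝ => u / (1-u))
      (((1-u)^2)⁻¹) (Ioo 0 1) u := by
    intro u hu
    have h1 : (1:ℝ) - u ≠ 0 := by have := hu.2; intro h; linarith [hu.2]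
    have := (hasDerivAt_id u).div ((hasDerivAt_id u).const_sub 1) h1
    exact (this.congr_deriv (by simp only [id_eq]; ring)).hasDerivWithinAt
  have hinj : InjOn (fun u : ℝ => u / (1-u)) (Ioo 0 1) := by
    intro u hu v hv h
    simp only at h
    have h1 : (1:ℝ) - u ≠ 0 := by intro hh; linarith [hu.2]
    have h2 : (1:ℝ) - v ≠ 0 := by intro hh; linarith [hv.2]
    field_simp at h
    linarith
  have hsub := integral_image_eq_integral_abs_deriv_smul measurableSet_Ioo hderiv hinj
      (fun x : ℝ => x ^ (p-1) / (1+x))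
  rw [himg] at hsub
  have hcongr : ∫ u in Ioo (0:ℝ) 1, |(((1-u)^2)⁻¹)| • ((u/(1-u)) ^ (p-1) / (1+u/(1-u)))
      = ∫ u in Ioo (0:ℝ) 1, u ^ (p-1) * (1-u) ^ (-p) := by
    apply setIntegral_congr_fun measurableSet_Ioo
    intro u hu
    have hu0 : (0:ℝ) < u := hu.1
    have hu1 : (0:ℝ) < 1 - u := by linarith [hu.2]
    have h1 : (1:ℝ) + u/(1-u) = (1-u)⁻¹ := by field_simp; ring
    have hne : (1:ℝ) - u ≠ 0 := ne_of_gt hu1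
    have hBpos : (0:ℝ) < (1-u) ^ (p-1) := Real.rpow_pos_of_pos hu1 _
    have e5 : (1-u)⁻¹ / (1-u) ^ (p-1) = (1-u) ^ (-p) := by
      rw [← Real.rpow_neg_one (1-u), ← Real.rpow_sub hu1]
      congr 1; ring
    simp only [smul_eq_mul]
    rw [h1, div_inv_eq_mul, Real.div_rpow hu0.le hu1.le, abs_of_pos (by positivity), ← e5]
    field_simp
  rw [hsub, hcongr]
  have hbeta : Complex.betaIntegral p (1-p) = ((π / Real.sin (π * p) : ℝ) : ℂ) := by
    have h1 : Complex.Gamma p * Complex.Gamma (1-p) =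
        Complex.Gamma ((p:ℂ) + (1-p)) * Complex.betaIntegral p (1-p) :=
      Complex.Gamma_mul_Gamma_eq_betaIntegral (by simpa using hp0)
        (by simp only [Complex.sub_re, Complex.one_re, Complex.ofReal_re]; linarith)
    rw [show (p:ℂ) + (1-(p:ℂ)) = 1 by ring, Complex.Gamma_one, one_mul] at h1
    rw [← h1, Complex.Gamma_mul_Gamma_one_sub]
    push_cast
    ring
  have h2 : Complex.betaIntegral (p:ℂ) (1-(p:ℂ)) =
      ((∫ u in Ioo (0:ℝ) 1, u ^ (p-1) * (1-u) ^ (-p) : ℝ) : ℂ) := by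
    rw [Complex.betaIntegral, intervalIntegral.integral_of_le zero_le_one,
      integral_Ioc_eq_integral_Ioo]
    calc ∫ t in Ioo (0:ℝ) 1, (t:ℂ) ^ ((p:ℂ)-1) * (1-(t:ℂ)) ^ (1-(p:ℂ)-1)
        = ∫ t in Ioo (0:ℝ) 1, ((t ^ (p-1) * (1-t) ^ (-p) : ℝ) : ℂ) := by
          apply setIntegral_congr_fun measurableSet_Ioo
          intro x hx
          have hx2 : (0:ℝ) ≤ 1 - x := by linarith [hx.2]
          simp only
          rw [Complex.ofReal_mul, Complex.ofReal_cpow hx.1.le, Complex.ofReal_cpow hx2]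
          push_cast
          norm_num
      _ = ((∫ u in Ioo (0:ℝ) 1, u ^ (p-1) * (1-u) ^ (-p) : ℝ) : ℂ) := integral_ofReal
  rw [h2] at hbeta
  exact_mod_cast hbeta

lemma scaled (p : ℝ) (hp0 : 0 < p) (hp1 : p < 1) {a : ℝ} (ha : 0 < a) :
    ∫ x in Ioi (0:ℝ), x ^ (p-1) / (x + a) = a ^ (p-1) * (π / Real.sin (π * p)) := by
  have hax : a ^ (p-1) = a * a ^ (p-2) := by
    rw [show p-1 = 1+(p-2) by ring, Real.rpow_add ha, Real.rpow_one]
  have h := integral_comp_mul_left_Ioi (fun x => x ^ (p-1) / (x + a)) 0 ha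
  simp only [mul_zero] at h
  have h2 : ∫ x in Ioi (0:ℝ), (a*x) ^ (p-1) / ((a*x) + a)
      = ∫ x in Ioi (0:ℝ), a ^ (p-2) * (x ^ (p-1) / (1+x)) := by
    apply setIntegral_congr_fun measurableSet_Ioi
    intro x hx
    have hx0 : (0:ℝ) < x := hx
    simp only
    rw [Real.mul_rpow ha.le hx0.le, hax]
    have hne1 : x + 1 ≠ 0 := by linarith
    field_simp
    ring
  rw [h2, integral_const_mul, base_case p hp0 hp1, smul_eq_mul] at h
  have hane : a ≠ 0 := ne_of_gt ha
  rw [hax]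
  field_simp at h ⊢
  rw [← h]

section
open Complex

lemma cplx_integral (p : ℝ) (hp0 : 0 < p) (hp1 : p < 1) {a : ℂ} (ha : 0 < a.re) :
    ∫ x in Ioi (0:ℝ), (x:ℂ) ^ ((p:ℂ)-1) / ((x:ℂ) + a)
      = ((π / Real.sin (π * p) : ℝ) : ℂ) * a ^ ((p:ℂ)-1) := by
  set U : Set ℂ := {z | 0 < z.re} with hU
  have hUopen : IsOpen U := isOpen_lt continuous_const Complex.continuous_re
  have hUslit : U ⊆ Complex.slitPlane := fun z hz => Complex.mem_slitPlane_iff.mpr (Or.inl hz)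
  set f : ℂ → ℂ := fun b => ∫ x in Ioi (0:ℝ), (x:ℂ) ^ ((p:ℂ)-1) / ((x:ℂ) + b) with hf_def
  set g : ℂ → ℂ := fun b => ((π / Real.sin (π * p) : ℝ) : ℂ) * b ^ ((p:ℂ)-1) with hg_def
  have hcont : ∀ b : ℂ, 0 < b.re →
      ContinuousOn (fun x : ℝ => (x:ℂ) ^ ((p:ℂ)-1) / ((x:ℂ) + b)) (Ioi 0) := fun b hb =>
    (contOn_cpow _).div ((Complex.continuous_ofReal.continuousOn).add continuousOn_const)
      (fun x hx => denom_ne hx hb)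
  have hcont2 : ∀ b : ℂ, 0 < b.re →
      ContinuousOn (fun x : ℝ => -((x:ℂ) ^ ((p:ℂ)-1) / ((x:ℂ) + b)^2)) (Ioi 0) := fun b hb =>
    ((contOn_cpow _).div
      (((Complex.continuous_ofReal.continuousOn).add continuousOn_const).pow 2)
      (fun x hx => pow_ne_zero 2 (denom_ne hx hb))).neg
  -- f is differentiable on U
  have hfdiff : DifferentiableOn ℂ f U := by
    intro a₀ ha₀
    have ha₀' : 0 < a₀.re := ha₀
    set ε : ℝ := a₀.re / 2 with hε
    have hε0 : 0 < ε := by positivity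
    have key := hasDerivAt_integral_of_dominated_loc_of_deriv_le (μ := volume.restrict (Ioi 0))
      (F := fun b (x : ℝ) => (x:ℂ) ^ ((p:ℂ)-1) / ((x:ℂ) + b))
      (F' := fun b (x : ℝ) => -((x:ℂ) ^ ((p:ℂ)-1) / ((x:ℂ) + b)^2))
      (x₀ := a₀) (bound := fun x : ℝ => x ^ (p-1) / (x + ε)^2) (s := Metric.ball a₀ ε) (Metric.ball_mem_nhds a₀ hε0)
      ?_ ?_ ?_ ?_ ?_ ?_
    · exact (key.2.differentiableAt).differentiableWithinAt
    · -- eventual measurability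
      filter_upwards [hUopen.mem_nhds ha₀] with b hb
      exact ((hcont b hb).aestronglyMeasurable measurableSet_Ioi)
    · exact int_cplx_one p hp0 hp1 ha₀'
    · exact ((hcont2 a₀ ha₀').aestronglyMeasurable measurableSet_Ioi)
    · -- bound
      filter_upwards [ae_restrict_mem measurableSet_Ioi] with x hx
      intro b hb
      have hx0 : (0:ℝ) < x := hx
      have hbre : ε ≤ b.re := by
        have h1 : |(b - a₀).re| ≤ ‖b - a₀‖ := Complex.abs_re_le_norm _
        rw [Metric.mem_ball, Complex.dist_eq] at hb
        have : |(b - a₀).re| < ε := lt_of_le_of_lt h1 hb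
        rw [Complex.sub_re, abs_lt] at this
        simp only [hε] at this ⊢
        linarith [this.1]
      have hbpos : 0 < b.re := lt_of_lt_of_le hε0 hbre
      rw [norm_neg, norm_div, norm_cpow_real hx0, norm_pow]
      apply div_le_div_of_nonneg_left (by positivity) (by positivity)
      have := norm_denom_ge hx0.le hbpos ε hbre
      have h2 : 0 < x + ε := by positivity
      nlinarith [norm_nonneg ((x:ℂ) + b)]
    · exact int_cplx_two p hp0 hp1 hε0
    · -- differentiability in b
      filter_upwards [ae_restrict_mem measurableSet_Ioi] with x hx
      intro b hb
      have hx0 : (0:ℝ) < x := hx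
      have hbpos : 0 < b.re := by
        have h1 : |(b - a₀).re| ≤ ‖b - a₀‖ := Complex.abs_re_le_norm _
        rw [Metric.mem_ball, Complex.dist_eq] at hb
        have : |(b - a₀).re| < ε := lt_of_le_of_lt h1 hb
        rw [Complex.sub_re, abs_lt] at this
        simp only [hε] at this
        linarith [this.1]
      have hne : (x:ℂ) + b ≠ 0 := denom_ne hx0 hbpos
      have hd : HasDerivAt (fun b : ℂ => (x:ℂ) + b) 1 b := (hasDerivAt_id b).const_add _
      have hfun : (fun b : ℂ => (x:ℂ) ^ ((p:ℂ)-1) / ((x:ℂ) + b))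
          = fun b : ℂ => (x:ℂ) ^ ((p:ℂ)-1) * ((x:ℂ) + b)⁻¹ := by
        funext b'; rw [div_eq_mul_inv]
      rw [hfun]
      have := ((hd.inv hne).const_mul ((x:ℂ) ^ ((p:ℂ)-1)))
      exact this.congr_deriv (by ring)
  -- g is differentiable on U
  have hgdiff : DifferentiableOn ℂ g U := by
    intro b hb
    exact (((Complex.hasStrictDerivAt_cpow_const
      (hUslit hb)).hasDerivAt.differentiableAt.const_mul _)).differentiableWithinAt
  -- they agree on positive reals
  have hreal : ∀ t : ℝ, 0 < t → f ((t:ℝ) : ℂ) = g ((t:ℝ) : ℂ) := by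
    intro t ht
    have htre : (0:ℝ) < ((t:ℂ)).re := by simpa using ht
    have h1 : f (t:ℂ) = ((∫ x in Ioi (0:ℝ), x ^ (p-1) / (x + t) : ℝ) : ℂ) := by
      rw [hf_def]
      calc ∫ x in Ioi (0:ℝ), (x:ℂ) ^ ((p:ℂ)-1) / ((x:ℂ) + (t:ℂ))
          = ∫ x in Ioi (0:ℝ), ((x ^ (p-1) / (x + t) : ℝ) : ℂ) := by
            apply setIntegral_congr_fun measurableSet_Ioi
            intro x hx
            have hx0 : (0:ℝ) < x := hx
            simp only
            rw [Complex.ofReal_div, Complex.ofReal_cpow hx0.le]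
            push_cast
            ring
        _ = ((∫ x in Ioi (0:ℝ), x ^ (p-1) / (x + t) : ℝ) : ℂ) := integral_ofReal
    rw [h1, scaled p hp0 hp1 ht, hg_def]
    simp only
    rw [Complex.ofReal_mul, Complex.ofReal_cpow ht.le]
    push_cast
    ring
  -- identity theorem
  have h1U : (1:ℂ) ∈ U := by simp [hU]
  have hfreq : ∃ᶠ z in nhdsWithin (1:ℂ) {(1:ℂ)}ᶜ, f z = g z := by
    have htend : Filter.Tendsto (fun n : ℕ => ((1 + ((n:ℝ)+1)⁻¹ : ℝ) : ℂ)) Filter.atTop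
        (nhdsWithin (1:ℂ) {(1:ℂ)}ᶜ) := by
      rw [tendsto_nhdsWithin_iff]
      constructor
      · have : Filter.Tendsto (fun n : ℕ => (1 + ((n:ℝ)+1)⁻¹ : ℝ)) Filter.atTop (nhds 1) := by
          have := tendsto_one_div_add_atTop_nhds_zero_nat (𝕜 := ℝ)
          simp only [one_div] at this
          simpa using tendsto_const_nhds.add this
        have h2 := (Complex.continuous_ofReal.tendsto 1).comp this
        simpa [Function.comp_def] using h2
      · filter_upwards with n
        simp only [mem_compl_iff, mem_singleton_iff]
        intro h
        have : (1 + ((n:ℝ)+1)⁻¹ : ℝ) = 1 := by exact_mod_cast h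
        have hpos : (0:ℝ) < ((n:ℝ)+1)⁻¹ := by positivity
        linarith
    apply htend.frequently
    apply Filter.Frequently.of_forall
    intro n
    exact hreal _ (by positivity)
  have heq := (hfdiff.analyticOnNhd hUopen).eqOn_of_preconnected_of_frequently_eq
    (hgdiff.analyticOnNhd hUopen) (convex_halfSpace_re_gt 0).isPreconnected h1U hfreq
  exact heq ha

lemma K_formula (μ θ : ℝ) (hμ0 : 0 < μ) (hμ1 : μ < 1) (hθ1 : π/2 < θ) (hθ2 : θ < π) :
    ∫ u in Ioi (0:ℝ), u ^ (μ-1) / (u^2 - 2*Real.cos θ*u + 1)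
      = π * Real.sin ((1-μ)*(π-θ)) / (Real.sin θ * Real.sin (π*μ)) := by
  have hcosneg : Real.cos θ < 0 := Real.cos_neg_of_pi_div_two_lt_of_lt hθ1 (by linarith [Real.pi_pos])
  have hsinpos : 0 < Real.sin θ := Real.sin_pos_of_pos_of_lt_pi (by linarith [Real.pi_pos]) hθ2
  set A : ℂ := (Real.cos θ : ℂ) with hA
  set B : ℂ := (Real.sin θ : ℂ) with hB
  set a₁ : ℂ := -(A + B*I) with ha₁
  set a₂ : ℂ := -(A - B*I) with ha₂
  have ha₁re : 0 < a₁.re := by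
    simp only [ha₁, hA, hB, Complex.neg_re, Complex.add_re, Complex.ofReal_re, Complex.mul_re,
      Complex.I_re, Complex.I_im, Complex.ofReal_im]
    ring_nf
    linarith
  have ha₂re : 0 < a₂.re := by
    simp only [ha₂, hA, hB, Complex.neg_re, Complex.sub_re, Complex.ofReal_re, Complex.mul_re,
      Complex.I_re, Complex.I_im, Complex.ofReal_im]
    ring_nf
    linarith
  have hr : (Real.cos θ)^2 + (Real.sin θ)^2 = 1 := by nlinarith [Real.sin_sq_add_cos_sq θ]
  have hABsq : A^2 + B^2 = 1 := by
    calc A^2 + B^2 = ((Real.cos θ^2 + Real.sin θ^2 : ℝ) : ℂ) := by push_cast [hA, hB]; ring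
    _ = 1 := by rw [hr]; norm_num
  have hsne : (2*I*B) ≠ 0 := by
    simp [hB, Complex.ext_iff]
    exact ne_of_gt hsinpos
  -- pointwise splitting
  have hpt : ∀ u : ℝ, 0 < u →
      ((u ^ (μ-1) / (u^2 - 2*Real.cos θ*u + 1) : ℝ) : ℂ)
        = ((u:ℂ) ^ ((μ:ℂ)-1) / ((u:ℂ) + a₁) - (u:ℂ) ^ ((μ:ℂ)-1) / ((u:ℂ) + a₂)) * (2*I*B)⁻¹ := by
    intro u hu
    have h1 : (u:ℂ) + a₁ ≠ 0 := denom_ne hu ha₁re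
    have h2 : (u:ℂ) + a₂ ≠ 0 := denom_ne hu ha₂re
    have hden : ((u:ℂ) + a₁) * ((u:ℂ) + a₂) = ((u^2 - 2*Real.cos θ*u + 1 : ℝ) : ℂ) := by
      rw [ha₁, ha₂]
      push_cast [-Complex.ofReal_cos]
      rw [← hA]
      linear_combination (1:ℂ) * hABsq - B^2 * Complex.I_sq
    have hcpow : ((u ^ (μ-1) : ℝ) : ℂ) = (u:ℂ) ^ ((μ:ℂ)-1) := by
      rw [Complex.ofReal_cpow hu.le]; push_cast; ring_nf
    rw [Complex.ofReal_div, hcpow, div_sub_div _ _ h1 h2, ← hden]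
    have hnum : (u:ℂ) ^ ((μ:ℂ)-1) * ((u:ℂ) + a₂) - ((u:ℂ) + a₁) * (u:ℂ) ^ ((μ:ℂ)-1)
        = (u:ℂ) ^ ((μ:ℂ)-1) * (2*I*B) := by
      rw [ha₁, ha₂]; ring
    rw [hnum]
    have hBne' : B ≠ 0 := right_ne_zero_of_mul hsne
    field_simp
  have hsinμ : 0 < Real.sin (π*μ) := Real.sin_pos_of_pos_of_lt_pi (by positivity)
    (by nlinarith [Real.pi_pos])
  have hi1 : IntegrableOn (fun x : ℝ => (x:ℂ) ^ ((μ:ℂ)-1) / ((x:ℂ) + a₁)) (Ioi 0) :=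
    int_cplx_one μ hμ0 hμ1 ha₁re
  have hi2 : IntegrableOn (fun x : ℝ => (x:ℂ) ^ ((μ:ℂ)-1) / ((x:ℂ) + a₂)) (Ioi 0) :=
    int_cplx_one μ hμ0 hμ1 ha₂re
  have hcoe : ((∫ u in Ioi (0:ℝ), u ^ (μ-1) / (u^2 - 2*Real.cos θ*u + 1) : ℝ) : ℂ)
      = ((∫ x in Ioi (0:ℝ), (x:ℂ) ^ ((μ:ℂ)-1) / ((x:ℂ) + a₁))
          - (∫ x in Ioi (0:ℝ), (x:ℂ) ^ ((μ:ℂ)-1) / ((x:ℂ) + a₂))) * (2*I*B)⁻¹ := by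
    calc ((∫ u in Ioi (0:ℝ), u ^ (μ-1) / (u^2 - 2*Real.cos θ*u + 1) : ℝ) : ℂ)
        = ∫ u in Ioi (0:ℝ), ((u ^ (μ-1) / (u^2 - 2*Real.cos θ*u + 1) : ℝ) : ℂ) :=
          integral_ofReal.symm
      _ = ∫ u in Ioi (0:ℝ), ((u:ℂ) ^ ((μ:ℂ)-1) / ((u:ℂ) + a₁)
            - (u:ℂ) ^ ((μ:ℂ)-1) / ((u:ℂ) + a₂)) * (2*I*B)⁻¹ := by
          apply setIntegral_congr_fun measurableSet_Ioi
          intro u hu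
          exact hpt u hu
      _ = ((∫ x in Ioi (0:ℝ), (x:ℂ) ^ ((μ:ℂ)-1) / ((x:ℂ) + a₁))
            - (∫ x in Ioi (0:ℝ), (x:ℂ) ^ ((μ:ℂ)-1) / ((x:ℂ) + a₂))) * (2*I*B)⁻¹ := by
          rw [integral_mul_const, integral_sub hi1 hi2]
  have hc : Real.cos (θ-π) = -Real.cos θ := by rw [Real.cos_sub]; simp
  have hsn : Real.sin (θ-π) = -Real.sin θ := by rw [Real.sin_sub]; simp
  have hexp1 : a₁ = Complex.exp (((θ-π : ℝ):ℂ)*I) := by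
    rw [Complex.exp_mul_I, ← Complex.ofReal_cos, ← Complex.ofReal_sin, hc, hsn, ha₁, hA, hB]
    push_cast
    ring
  have hc2 : Real.cos (π-θ) = -Real.cos θ := by rw [Real.cos_sub]; simp
  have hsn2 : Real.sin (π-θ) = Real.sin θ := by rw [Real.sin_sub]; simp
  have hexp2 : a₂ = Complex.exp (((π-θ : ℝ):ℂ)*I) := by
    rw [Complex.exp_mul_I, ← Complex.ofReal_cos, ← Complex.ofReal_sin, hc2, hsn2, ha₂, hA, hB]
    push_cast
    ring
  have hcpow1 : a₁ ^ ((μ:ℂ)-1) = Complex.exp (((((1-μ)*(π-θ)) : ℝ):ℂ)*I) := by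
    rw [hexp1, Complex.cpow_def_of_ne_zero (Complex.exp_ne_zero _), Complex.log_exp]
    · congr 1
      push_cast
      ring
    · simp only [Complex.mul_im, Complex.ofReal_re, Complex.I_im, Complex.ofReal_im,
        Complex.I_re]
      nlinarith [Real.pi_pos]
    · simp only [Complex.mul_im, Complex.ofReal_re, Complex.I_im, Complex.ofReal_im,
        Complex.I_re]
      nlinarith [Real.pi_pos]
  have hcpow2 : a₂ ^ ((μ:ℂ)-1) = Complex.exp ((((-((1-μ)*(π-θ))) : ℝ):ℂ)*I) := by
    rw [hexp2, Complex.cpow_def_of_ne_zero (Complex.exp_ne_zero _), Complex.log_exp]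
    · congr 1
      push_cast
      ring
    · simp only [Complex.mul_im, Complex.ofReal_re, Complex.I_im, Complex.ofReal_im,
        Complex.I_re]
      nlinarith [Real.pi_pos]
    · simp only [Complex.mul_im, Complex.ofReal_re, Complex.I_im, Complex.ofReal_im,
        Complex.I_re]
      nlinarith [Real.pi_pos]
  have hdiff : Complex.exp (((((1-μ)*(π-θ)) : ℝ):ℂ)*I)
      - Complex.exp ((((-((1-μ)*(π-θ))) : ℝ):ℂ)*I) = 2*I*((Real.sin ((1-μ)*(π-θ)) : ℝ):ℂ) := by
    rw [Complex.exp_mul_I, Complex.exp_mul_I, ← Complex.ofReal_cos, ← Complex.ofReal_sin,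
      ← Complex.ofReal_cos, ← Complex.ofReal_sin, Real.cos_neg, Real.sin_neg]
    push_cast
    ring
  have hfinal : ((∫ u in Ioi (0:ℝ), u ^ (μ-1) / (u^2 - 2*Real.cos θ*u + 1) : ℝ) : ℂ)
      = ((π * Real.sin ((1-μ)*(π-θ)) / (Real.sin θ * Real.sin (π*μ)) : ℝ) : ℂ) := by
    have hBne : B ≠ 0 := by
      rw [hB]; exact_mod_cast ne_of_gt hsinpos
    have hμne : ((Real.sin (π*μ) : ℝ):ℂ) ≠ 0 := by exact_mod_cast ne_of_gt hsinμ
    have key : ∀ z : ℂ, 2*I*z * (2*I*B)⁻¹ = z / B := by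
      intro z
      field_simp [Complex.I_ne_zero]
    rw [hcoe, cplx_integral μ hμ0 hμ1 ha₁re, cplx_integral μ hμ0 hμ1 ha₂re, hcpow1, hcpow2,
      ← mul_sub, hdiff, mul_assoc, key, hB]
    push_cast [-Complex.ofReal_sin]
    field_simp
  exact_mod_cast hfinal

end

section Dsec
variable (α c : ℝ)

lemma D_ge_one (hc : c ≤ 0) {t : ℝ} (ht : 0 < t) : 1 ≤ t^(2*α) - 2*c*t^α + 1 := by
  have h1 : 0 < t^(2*α) := Real.rpow_pos_of_pos ht _
  have h2 : 0 < t^α := Real.rpow_pos_of_pos ht _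
  nlinarith

lemma D_ge_pow (hc : c ≤ 0) {t : ℝ} (ht : 0 < t) : t^(2*α) ≤ t^(2*α) - 2*c*t^α + 1 := by
  have h2 : 0 < t^α := Real.rpow_pos_of_pos ht _
  nlinarith

lemma D_pos (hc : c ≤ 0) {t : ℝ} (ht : 0 < t) : 0 < t^(2*α) - 2*c*t^α + 1 :=
  lt_of_lt_of_le one_pos (D_ge_one α c hc ht)

lemma D_contOn (hc : c ≤ 0) :
    ContinuousOn (fun t : ℝ => t^(2*α) - 2*c*t^α + 1) (Ioi 0) := by
  apply ContinuousOn.add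
  apply ContinuousOn.sub
  · exact fun t ht => (Real.continuousAt_rpow_const t _ (Or.inl (ne_of_gt ht))).continuousWithinAt
  · exact ContinuousOn.mul continuousOn_const
      (fun t ht => (Real.continuousAt_rpow_const t _ (Or.inl (ne_of_gt ht))).continuousWithinAt)
  · exact continuousOn_const

lemma int_J (r : ℝ) (hα0 : 0 < α) (hc : c ≤ 0) (hr1 : -α < r) (hr2 : r < α) :
    IntegrableOn (fun t : ℝ => t^(r+α-1)/(t^(2*α) - 2*c*t^α + 1)) (Ioi 0) := by
  refine integrableOn_of_rpow_bounds (p := r+α-1) (q := r-α-1) (C := 1)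
    (by linarith) (by linarith) ?_ ?_ ?_
  · apply ContinuousOn.div
    · exact fun t ht => (Real.continuousAt_rpow_const t _ (Or.inl (ne_of_gt ht))).continuousWithinAt
    · exact D_contOn α c hc
    · exact fun t ht => ne_of_gt (D_pos α c hc ht)
  · intro t ht
    have ht0 : 0 < t := ht.1
    rw [Real.norm_eq_abs, abs_of_nonneg (le_of_lt (div_pos (Real.rpow_pos_of_pos ht0 _)
      (D_pos α c hc ht0))), one_mul]
    calc t^(r+α-1)/(t^(2*α) - 2*c*t^α + 1) ≤ t^(r+α-1)/1 :=
          div_le_div_of_nonneg_left (le_of_lt (Real.rpow_pos_of_pos ht0 _)) one_pos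
            (D_ge_one α c hc ht0)
      _ = t^(r+α-1) := div_one _
  · intro t ht
    have ht0 : (0:ℝ) < t := lt_trans one_pos ht
    rw [Real.norm_eq_abs, abs_of_nonneg (le_of_lt (div_pos (Real.rpow_pos_of_pos ht0 _)
      (D_pos α c hc ht0))), one_mul]
    calc t^(r+α-1)/(t^(2*α) - 2*c*t^α + 1) ≤ t^(r+α-1)/t^(2*α) :=
          div_le_div_of_nonneg_left (le_of_lt (Real.rpow_pos_of_pos ht0 _))
            (Real.rpow_pos_of_pos ht0 _) (D_ge_pow α c hc ht0)
      _ = t^(r-α-1) := by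
          rw [← Real.rpow_sub ht0]
          congr 1
          ring

lemma subst_J (r : ℝ) (hα0 : 0 < α) :
    ∫ t in Ioi (0:ℝ), t^(r+α-1)/(t^(2*α) - 2*c*t^α + 1)
      = α⁻¹ * ∫ u in Ioi (0:ℝ), u^((1+r/α)-1)/(u^2 - 2*c*u + 1) := by
  rw [← integral_comp_rpow_Ioi (fun u => u^((1+r/α)-1)/(u^2 - 2*c*u + 1)) (ne_of_gt hα0),
    ← integral_const_mul]
  apply setIntegral_congr_fun measurableSet_Ioi
  intro t ht
  have ht0 : (0:ℝ) < t := ht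
  have htα : 0 < t^α := Real.rpow_pos_of_pos ht0 _
  simp only [smul_eq_mul]
  have h1 : (t^α)^((1+r/α)-1) = t^r := by
    rw [← Real.rpow_mul ht0.le]
    congr 1
    field_simp; ring
  have h2 : (t^α)^2 = t^(2*α) := by
    rw [← Real.rpow_natCast (t^α) 2, ← Real.rpow_mul ht0.le]
    congr 1
    push_cast
    ring
  have h3 : t^(r+α-1) = t^(α-1) * t^r := by
    rw [← Real.rpow_add ht0]
    congr 1
    ring
  rw [h1, h2, abs_of_pos hα0, h3]
  have hαne : α ≠ 0 := ne_of_gt hα0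
  by_cases hDne : t^(2*α) - 2*c*t^α + 1 = 0
  · rw [hDne]
    simp
  · field_simp

lemma inv_J (s : ℝ) (hα0 : 0 < α) :
    ∫ t in Ioi (0:ℝ), t^(s+1+α-1)/(t^(2*α) - 2*c*t^α + 1)
      = ∫ t in Ioi (0:ℝ), t^(-s-1+α-1)/(t^(2*α) - 2*c*t^α + 1) := by
  rw [← integral_comp_rpow_Ioi (fun t => t^(s+1+α-1)/(t^(2*α) - 2*c*t^α + 1))
    (show (-1:ℝ) ≠ 0 by norm_num)]
  apply setIntegral_congr_fun measurableSet_Ioi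
  intro x hx
  have hx0 : (0:ℝ) < x := hx
  simp only [smul_eq_mul]
  have hpow : ∀ y : ℝ, (x^(-1:ℝ))^y = x^(-y) := by
    intro y
    rw [← Real.rpow_mul hx0.le]
    congr 1
    ring
  have e0 : x^(-(2*α)) * x^(2*α) = 1 := by
    rw [← Real.rpow_add hx0, neg_add_cancel, Real.rpow_zero]
  have e1 : x^(-(2*α)) * x^α = x^(-α) := by
    rw [← Real.rpow_add hx0]
    congr 1
    ring
  have hDinv : (x^(-1:ℝ))^(2*α) - 2*c*(x^(-1:ℝ))^α + 1
      = x^(-(2*α)) * (x^(2*α) - 2*c*x^α + 1) := by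
    rw [hpow, hpow]
    linear_combination (-1:ℝ)*e0 + (2*c)*e1
  rw [hDinv, hpow]
  have hM : x^(-(2*α)) ≠ 0 := ne_of_gt (Real.rpow_pos_of_pos hx0 _)
  by_cases hDne : x^(2*α) - 2*c*x^α + 1 = 0
  · rw [hDne]
    simp
  · have key : |(-1:ℝ)| * x^(-1-1:ℝ) * x^(-(s+1+α-1)) = x^(-s-1+α-1) * x^(-(2*α)) := by
      rw [abs_of_nonpos (by norm_num : (-1:ℝ) ≤ 0), neg_neg, one_mul, ← Real.rpow_add hx0,
        ← Real.rpow_add hx0]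
      congr 1
      ring
    have hsplit : |(-1:ℝ)| * x^(-1-1:ℝ)
          * (x^(-(s+1+α-1)) / (x^(-(2*α)) * (x^(2*α) - 2*c*x^α + 1)))
        = (|(-1:ℝ)| * x^(-1-1:ℝ) * x^(-(s+1+α-1)))
            / (x^(-(2*α)) * (x^(2*α) - 2*c*x^α + 1)) := by
      ring
    rw [hsplit, key, mul_comm (x^(-s-1+α-1)) _, mul_div_mul_left _ _ hM]

lemma final_trig (α s : ℝ) (hα1 : 1/2 < α) (hα2 : α < 1) (hs1 : -α < s) (hs2 : s < α - 1) :
    Real.sin (π*α)/π *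
      (α⁻¹ * (π * Real.sin ((1-(1+s/α))*(π-π*α)) /
          (Real.sin (π*α) * Real.sin (π*(1+s/α))))
        + α⁻¹ * (π * Real.sin ((1-(1+(-s-1)/α))*(π-π*α)) /
          (Real.sin (π*α) * Real.sin (π*(1+(-s-1)/α)))))
      = -(Real.sin (π / α) * Real.sin (π * s)) /
        (α * Real.sin (π * s / α) * Real.sin (π * (s + 1) / α)) := by
  have hα0 : 0 < α := by linarith
  have hαne : α ≠ 0 := ne_of_gt hα0
  have hπ := Real.pi_pos
  have hπne : π ≠ 0 := ne_of_gt hπ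
  have hs0 : s < 0 := by linarith
  have hSpos : 0 < Real.sin (π*α) :=
    Real.sin_pos_of_pos_of_lt_pi (by positivity) (by nlinarith)
  have hapos : 0 < Real.sin (-(π*s/α)) := by
    apply Real.sin_pos_of_pos_of_lt_pi
    · rw [neg_pos]
      apply div_neg_of_neg_of_pos _ hα0
      nlinarith
    · rw [show -(π*s/α) = π*(-s)/α by ring, div_lt_iff₀ hα0]
      nlinarith
  have hasin : Real.sin (π*s/α) ≠ 0 := by
    rw [← neg_neg (π*s/α), Real.sin_neg]
    intro h
    rw [neg_eq_zero] at h
    exact ne_of_gt hapos h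
  have hbpos : 0 < Real.sin (π*(s+1)/α) := by
    apply Real.sin_pos_of_pos_of_lt_pi
    · apply div_pos _ hα0
      nlinarith
    · rw [div_lt_iff₀ hα0]
      nlinarith
  have hbsin : Real.sin (π*(s+1)/α) ≠ 0 := ne_of_gt hbpos
  have e1 : (1-(1+s/α))*(π-π*α) = π*s - π*s/α := by field_simp; ring
  have e2 : π*(1+s/α) = π + π*s/α := by field_simp
  have e3 : (1-(1+(-s-1)/α))*(π-π*α) = (π*(s+1)/α - π*s) - π := by field_simp; ring
  have e4 : π*(1+(-s-1)/α) = π - π*(s+1)/α := by field_simp; ring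
  have e5 : π/α = π*(s+1)/α - π*s/α := by field_simp; ring
  rw [e1, e2, e3, e4, e5]
  rw [show Real.sin (π + π*s/α) = -Real.sin (π*s/α) by rw [Real.sin_add]; simp]
  rw [Real.sin_pi_sub]
  rw [show Real.sin ((π*(s+1)/α - π*s) - π) = -Real.sin (π*(s+1)/α - π*s) by
    rw [Real.sin_sub _ π]; simp]
  rw [Real.sin_sub (π*s), Real.sin_sub (π*(s+1)/α) (π*s), Real.sin_sub (π*(s+1)/α) (π*s/α)]
  field_simp
  ring

theorem mellin_fa (α s : ℝ) (hα : α ∈ Set.Ioo (1/2 : ℝ) 1) (hs : s ∈ Set.Ioo (-α) (α - 1)) :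
    ∫ t in Set.Ioi (0:ℝ),
        t ^ s * (Real.sin (Real.pi * α) * t ^ (α - 1) * (1 + t) /
          (Real.pi * (t ^ (2 * α) - 2 * Real.cos (Real.pi * α) * t ^ α + 1))) =
      -(Real.sin (Real.pi / α) * Real.sin (Real.pi * s)) /
        (α * Real.sin (Real.pi * s / α) * Real.sin (Real.pi * (s + 1) / α)) := by
  obtain ⟨hα1, hα2⟩ := hα
  obtain ⟨hs1, hs2⟩ := hs
  have hα0 : 0 < α := by linarith
  have hπ := Real.pi_pos
  have hθ1 : π/2 < π*α := by nlinarith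
  have hθ2 : π*α < π := by nlinarith
  have hc : Real.cos (π*α) ≤ 0 :=
    le_of_lt (Real.cos_neg_of_pi_div_two_lt_of_lt hθ1 (by linarith))
  have hμ₁0 : 0 < 1 + s/α := by
    have : -1 < s/α := by rw [lt_div_iff₀ hα0]; linarith
    linarith
  have hμ₁1 : 1 + s/α < 1 := by
    have : s/α < 0 := div_neg_of_neg_of_pos (by linarith) hα0
    linarith
  have hμ₂0 : 0 < 1 + (-s-1)/α := by
    have : -1 < (-s-1)/α := by rw [lt_div_iff₀ hα0]; linarith
    linarith
  have hμ₂1 : 1 + (-s-1)/α < 1 := by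
    have : (-s-1)/α < 0 := div_neg_of_neg_of_pos (by linarith) hα0
    linarith
  have hstep1 : ∫ t in Set.Ioi (0:ℝ),
        t ^ s * (Real.sin (π * α) * t ^ (α - 1) * (1 + t) /
          (π * (t ^ (2 * α) - 2 * Real.cos (π * α) * t ^ α + 1)))
      = Real.sin (π*α)/π *
        ((∫ t in Ioi (0:ℝ), t^(s+α-1)/(t^(2*α) - 2*Real.cos (π*α)*t^α + 1))
          + ∫ t in Ioi (0:ℝ), t^(s+1+α-1)/(t^(2*α) - 2*Real.cos (π*α)*t^α + 1)) := by
    rw [← integral_add (int_J α _ s hα0 hc hs1 (by linarith))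
      (int_J α _ (s+1) hα0 hc (by linarith) (by linarith)), ← integral_const_mul]
    apply setIntegral_congr_fun measurableSet_Ioi
    intro t ht
    have ht0 : (0:ℝ) < t := ht
    have hD : t^(2*α) - 2*Real.cos (π*α)*t^α + 1 ≠ 0 := ne_of_gt (D_pos α _ hc ht0)
    have h1 : t^(s+α-1) = t^s * t^(α-1) := by
      rw [show s+α-1 = s + (α-1) by ring, Real.rpow_add ht0]
    have h2 : t^(s+1+α-1) = t^(s+α-1) * t := by
      rw [show s+1+α-1 = (s+α-1) + 1 by ring, Real.rpow_add ht0, Real.rpow_one]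
    simp only
    rw [h2, h1]
    field_simp
  rw [hstep1, inv_J α _ s hα0, subst_J α _ s hα0, subst_J α _ (-s-1) hα0,
    K_formula (1+s/α) (π*α) hμ₁0 hμ₁1 hθ1 hθ2,
    K_formula (1+(-s-1)/α) (π*α) hμ₂0 hμ₂1 hθ1 hθ2]
  exact final_trig α s hα1 hα2 hs1 hs2
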